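/- Let K be a finite field with q elements and let a ∈ K. Set N := q·(q−1)·(q+1) (which equals (q² − q)(q² − 1)/(q − 1)). Then the matrix Y_a = [[a, 1],[1, 0]] over K satisfies Y_a^N = 1 (the identity matrix), and consequently the sequence f_a is periodic with period dividing N: f_a(n + N) = f_a(n) for all natural numbers n. -/

import Mathlib

open Polynomial


/-- The sequence `f_a` with `f_a(0) = 0`, `f_a(1) = 1`, `f_a(n+2) = a·f_a(n+1) + f_a(n)`,
governing the powers of the Tillich–Zémor generator `Y_a = !![a, 1; 1, 0]`. -/
def tzSeq {R : Type*} [CommRing R] (a : R) : ℕ → R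
  | 0 => 0
  | 1 => 1
  | n + 2 => a * tzSeq a (n + 1) + tzSeq a n

lemma tz_pow_matrix {R : Type*} [CommRing R] (a : R) (n : ℕ) :
    (!![a, 1; 1, 0] : Matrix (Fin 2) (Fin 2) R) ^ (n + 1) =
      !![tzSeq a (n + 2), tzSeq a (n + 1); tzSeq a (n + 1), tzSeq a n] := by
  induction n with
  | zero => simp [tzSeq, pow_one]
  | succ m ih =>
      rw [pow_succ, ih, Matrix.mul_fin_two]
      have h2 : tzSeq a (m + 3) = a * tzSeq a (m + 2) + tzSeq a (m + 1) := rfl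
      have h1 : tzSeq a (m + 2) = a * tzSeq a (m + 1) + tzSeq a m := rfl
      ext i j; fin_cases i <;> fin_cases j <;> simp [h2, h1] <;> ring

lemma tz_pow_aux {K : Type*} [Field K] [Fintype K] (m : ℕ) :
    ((X : K[X]) ^ m - 1) ^ (Fintype.card K) = X ^ (m * Fintype.card K) - 1 := by
  obtain ⟨n, hp, hcard⟩ := FiniteField.card K (ringChar K)
  haveI : Fact (Nat.Prime (ringChar K)) := ⟨hp⟩
  rw [hcard, sub_pow_char_pow, one_pow, ← pow_mul]

lemma tz_dvd_key {K : Type*} [Field K] [Fintype K] (a : K) :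
    (X ^ 2 - C a * X - 1 : K[X]) ∣
      X ^ (Fintype.card K * (Fintype.card K - 1) * (Fintype.card K + 1)) - 1 := by
  set q := Fintype.card K with hq
  set f : K[X] := X ^ 2 - C a * X - 1 with hf
  have hq2 : 2 ≤ q := Fintype.one_lt_card
  -- reduce to finding m ∣ N with f ∣ X^m - 1
  have step : ∀ m : ℕ, m ∣ q * (q - 1) * (q + 1) → f ∣ X ^ m - 1 →
      f ∣ X ^ (q * (q - 1) * (q + 1)) - 1 := by
    intro m hm hdvd
    obtain ⟨k, hk⟩ := hm
    refine hdvd.trans ?_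
    have := sub_dvd_pow_sub_pow (X ^ m : K[X]) 1 k
    rwa [one_pow, ← pow_mul, ← hk] at this
  have hmonic : f.Monic := by
    rw [hf]; monicity!
  have hdeg : f.natDegree = 2 := by
    rw [hf]; compute_degree!
  by_cases hirr : Irreducible f
  · -- irreducible case: m = q^2 - 1
    haveI : Fact (Irreducible f) := ⟨hirr⟩
    haveI : Finite (AdjoinRoot f) := by
      have : Module.Finite K (AdjoinRoot f) :=
        Module.Finite.of_basis (AdjoinRoot.powerBasis (f := f) hirr.ne_zero).basis
      exact Module.finite_of_finite K
    haveI : Fintype (AdjoinRoot f) := Fintype.ofFinite _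
    have hcard : Fintype.card (AdjoinRoot f) = q ^ 2 := by
      have : Module.Finite K (AdjoinRoot f) :=
        Module.Finite.of_basis (AdjoinRoot.powerBasis (f := f) hirr.ne_zero).basis
      rw [Module.card_eq_pow_finrank (K := K), (AdjoinRoot.powerBasis (f := f) hirr.ne_zero).finrank,
        AdjoinRoot.powerBasis_dim, hdeg]
    have hu0 : AdjoinRoot.root f ≠ 0 := by
      intro h
      have h2 : (AdjoinRoot.mk f) (X ^ 2 - C a * X - 1) = 0 := AdjoinRoot.mk_self
      simp only [map_sub, map_pow, map_mul, map_one, AdjoinRoot.mk_X, AdjoinRoot.mk_C,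
        show AdjoinRoot.root f = 0 from h] at h2
      simp at h2
    have hu : AdjoinRoot.root f ^ (q ^ 2 - 1) = 1 := by
      rw [← hcard]; exact FiniteField.pow_card_sub_one_eq_one _ hu0
    have e : q ^ 2 - 1 = (q - 1) * (q + 1) := by
      have h9 : q ^ 2 = (q - 1) * (q + 1) + 1 := by
        obtain ⟨r, hr⟩ : ∃ r, q = 2 + r := ⟨q - 2, by omega⟩
        rw [hr, show 2 + r - 1 = r + 1 from by omega]; ring
      exact Nat.sub_eq_of_eq_add h9
    refine step (q ^ 2 - 1) ⟨q, by rw [e]; ring⟩ ?_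
    rw [← AdjoinRoot.mk_eq_zero]
    rw [map_sub, map_pow, map_one, AdjoinRoot.mk_X, hu, sub_self]
  · -- reducible: f = (X + C c₁)(X + C c₂)
    obtain ⟨c₁, c₂, h0, h1⟩ := (hmonic.not_irreducible_iff_exists_add_mul_eq_coeff hdeg).mp hirr
    have hc0 : f.coeff 0 = -1 := by simp [hf, coeff_one]
    have hc1 : f.coeff 1 = -a := by simp [hf, coeff_one, coeff_X_pow]
    rw [hc0] at h0; rw [hc1] at h1
    have hfac : f = (X + C c₁) * (X + C c₂) := by
      have : ((X + C c₁) * (X + C c₂) : K[X]) = X ^ 2 + C (c₁ + c₂) * X + C (c₁ * c₂) := by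
        rw [C_add, C_mul]; ring
      rw [this, ← h0, ← h1, hf, map_neg, map_neg, map_one]
      ring
    have hc₁ : c₁ ≠ 0 := by rintro rfl; simp at h0
    have hc₂ : c₂ ≠ 0 := by rintro rfl; simp at h0
    have lin_dvd : ∀ c : K, c ≠ 0 → (X + C c : K[X]) ∣ X ^ (q - 1) - 1 := by
      intro c hc
      have : (X + C c : K[X]) = X - C (-c) := by simp [sub_neg_eq_add]
      rw [this, dvd_iff_isRoot]
      simp [IsRoot, hq, FiniteField.pow_card_sub_one_eq_one (-c) (neg_ne_zero.mpr hc)]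
    by_cases hcc : c₁ = c₂
    · -- repeated root: m = (q - 1) * q
      subst hcc
      refine step ((q - 1) * q) ⟨q + 1, by ring⟩ ?_
      have h2 : f ∣ (X ^ (q - 1) - 1 : K[X]) ^ q := by
        calc f = (X + C c₁) ^ 2 := by rw [hfac]; ring
        _ ∣ (X ^ (q - 1) - 1 : K[X]) ^ 2 := pow_dvd_pow_of_dvd (lin_dvd c₁ hc₁) 2
        _ ∣ (X ^ (q - 1) - 1 : K[X]) ^ q := pow_dvd_pow _ hq2
      rwa [tz_pow_aux (q - 1)] at h2
    · -- distinct roots: m = q - 1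
      refine step (q - 1) ⟨q * (q + 1), by ring⟩ ?_
      obtain ⟨g, hg⟩ := lin_dvd c₁ hc₁
      have hroot : g.IsRoot (-c₂) := by
        have h4 := congrArg (fun p => Polynomial.eval (-c₂) p) hg
        simp [hq, FiniteField.pow_card_sub_one_eq_one (-c₂) (neg_ne_zero.mpr hc₂)] at h4
        rcases h4 with h5 | h5
        · exact absurd (show c₁ = c₂ by linear_combination h5) hcc
        · exact h5
      obtain ⟨h, hh⟩ := (dvd_iff_isRoot.mpr hroot : (X - C (-c₂) : K[X]) ∣ g)
      rw [hg, hh, hfac, map_neg, sub_neg_eq_add]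
      exact ⟨h, by ring⟩

/-- Over a finite field with `q` elements, `Y_a^(q·(q-1)·(q+1)) = 1`, and
hence the sequence `f_a` is periodic with period dividing `N = q·(q-1)·(q+1)`. -/
theorem tz_generator_periodic {K : Type*} [Field K] [Fintype K] (a : K) :
    (!![a, 1; 1, 0] : Matrix (Fin 2) (Fin 2) K) ^
        (Fintype.card K * (Fintype.card K - 1) * (Fintype.card K + 1)) = 1 ∧
    ∀ n : ℕ,
      tzSeq a (n + Fintype.card K * (Fintype.card K - 1) * (Fintype.card K + 1)) =
        tzSeq a n := by
  set q := Fintype.card K with hq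
  set N := q * (q - 1) * (q + 1) with hN
  set Y : Matrix (Fin 2) (Fin 2) K := !![a, 1; 1, 0] with hY
  have hq2 : 2 ≤ q := Fintype.one_lt_card
  have hN1 : 1 ≤ N := by
    have : 0 < q * (q - 1) * (q + 1) :=
      Nat.mul_pos (Nat.mul_pos (by omega) (by omega)) (by omega)
    omega
  have hYf : Y ^ 2 - (algebraMap K (Matrix (Fin 2) (Fin 2) K) a) * Y - 1 = 0 := by
    ext i j
    fin_cases i <;> fin_cases j <;>
      simp [hY, pow_two, Matrix.mul_apply, Fin.sum_univ_succ,
        Matrix.algebraMap_matrix_apply, Matrix.one_apply] <;> ring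
  obtain ⟨g, hg⟩ := tz_dvd_key a
  have hpow : Y ^ N = 1 := by
    have h2 := congrArg (fun p => Polynomial.aeval Y p) hg
    simp only [map_sub, map_pow, map_mul, map_one, aeval_X, aeval_C] at h2
    rw [hYf, zero_mul] at h2
    exact sub_eq_zero.mp h2
  refine ⟨hpow, fun n => ?_⟩
  cases n with
  | zero =>
      have h3 := tz_pow_matrix a (N - 1)
      rw [show N - 1 + 1 = N from by omega, hpow] at h3
      have h4 := congrArg (fun M : Matrix (Fin 2) (Fin 2) K => M 0 1) h3
      simp at h4
      rw [zero_add]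
      exact h4.symm
  | succ m =>
      have h5 : Y ^ (m + 1 + N) = Y ^ (m + 1) := by
        rw [pow_add, hpow, mul_one]
      rw [show m + 1 + N = (m + N) + 1 from by omega, tz_pow_matrix, tz_pow_matrix] at h5
      have h6 := congrArg (fun M : Matrix (Fin 2) (Fin 2) K => M 0 1) h5
      simp at h6
      rw [show m + N + 1 = m + 1 + N from by omega] at h6
      exact h6
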